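/- Let N be a central ideal of a finite-dimensional Lie algebra L. Then the following are equivalent: (i) M(L) ≅ M(L/N)/(N ∩ L²) (via the natural maps); (ii) N is contained in the exterior center Z^∧(L); (iii) the natural map M(L) → M(L/N) is injective. -/

import Mathlib

open Module

/-- The Schur multiplier `M(L) = (R ∩ F²)/[R,F]` of a Lie algebra `L`, computed from a
free presentation `π : FreeLieAlgebra K X → L` (with `R = ker π`, `F² = [F,F]`). -/
noncomputable abbrev lieSchurMultiplier (K : Type) [Field K] (X : Type) {L : Type}
    [LieRing L] [LieAlgebra K L] (π : FreeLieAlgebra K X →ₗ⁅K⁆ L) : Type :=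
  ↥((π.ker ⊓ LieModule.lowerCentralSeries K (FreeLieAlgebra K X) (FreeLieAlgebra K X) 1 :
      LieIdeal K (FreeLieAlgebra K X)) : Submodule K (FreeLieAlgebra K X)) ⧸
    Submodule.comap
      ((π.ker ⊓ LieModule.lowerCentralSeries K (FreeLieAlgebra K X) (FreeLieAlgebra K X) 1 :
        LieIdeal K (FreeLieAlgebra K X)) : Submodule K (FreeLieAlgebra K X)).subtype
      ((⁅π.ker, (⊤ : LieIdeal K (FreeLieAlgebra K X))⁆ :
        LieIdeal K (FreeLieAlgebra K X)) : Submodule K (FreeLieAlgebra K X))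

/-- The exterior center `Z^∧(L)` of `L`, computed from a free presentation `π : F → L`:
`x ∈ Z^∧(L)` iff `x ∧ y = 0` in `L ∧ L ≅ F²/[R,F]` for all `y ∈ L`. -/
def lieExteriorCenter (K : Type) [Field K] (X : Type) {L : Type}
    [LieRing L] [LieAlgebra K L] (π : FreeLieAlgebra K X →ₗ⁅K⁆ L) : Set L :=
  {x : L | ∀ a : FreeLieAlgebra K X, π a = x → ∀ b : FreeLieAlgebra K X,
    ⁅a, b⁆ ∈ (⁅π.ker, (⊤ : LieIdeal K (FreeLieAlgebra K X))⁆ :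
      LieIdeal K (FreeLieAlgebra K X))}

/-- The quotient map `L → L/N` as a Lie algebra homomorphism. -/
def lieQuotientMkHom (K : Type) [Field K] {L : Type} [LieRing L] [LieAlgebra K L]
    (N : LieIdeal K L) : L →ₗ⁅K⁆ L ⧸ N :=
  { ((N : Submodule K L).mkQ : L →ₗ[K] L ⧸ N) with map_lie' := rfl }

/-- The free presentation of `L/N` induced by a free presentation of `L`. -/
noncomputable def lieInducedPresentation (K : Type) [Field K] {L : Type} [LieRing L] [LieAlgebra K L]
    (N : LieIdeal K L) (X : Type) (π : FreeLieAlgebra K X →ₗ⁅K⁆ L) :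
    FreeLieAlgebra K X →ₗ⁅K⁆ (L ⧸ N) :=
  (lieQuotientMkHom K N).comp π

lemma lieKer_le_inducedKer (K : Type) [Field K] {L : Type} [LieRing L] [LieAlgebra K L]
    (N : LieIdeal K L) (X : Type) (π : FreeLieAlgebra K X →ₗ⁅K⁆ L) :
    π.ker ≤ (lieInducedPresentation K N X π).ker := by
  intro x hx
  rw [LieHom.mem_ker] at hx ⊢
  show (lieQuotientMkHom K N) (π x) = 0
  rw [hx]
  exact (lieQuotientMkHom K N).map_zero

lemma lieSchur_sub_le (K : Type) [Field K] {L : Type} [LieRing L] [LieAlgebra K L]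
    (N : LieIdeal K L) (X : Type) (π : FreeLieAlgebra K X →ₗ⁅K⁆ L) :
    ((π.ker ⊓ LieModule.lowerCentralSeries K (FreeLieAlgebra K X) (FreeLieAlgebra K X) 1 :
        LieIdeal K (FreeLieAlgebra K X)) : Submodule K (FreeLieAlgebra K X)) ≤
      (((lieInducedPresentation K N X π).ker ⊓
          LieModule.lowerCentralSeries K (FreeLieAlgebra K X) (FreeLieAlgebra K X) 1 :
        LieIdeal K (FreeLieAlgebra K X)) : Submodule K (FreeLieAlgebra K X)) := by
  intro x hx
  have hle : π.ker ⊓ LieModule.lowerCentralSeries K (FreeLieAlgebra K X) (FreeLieAlgebra K X) 1 ≤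
      (lieInducedPresentation K N X π).ker ⊓
        LieModule.lowerCentralSeries K (FreeLieAlgebra K X) (FreeLieAlgebra K X) 1 :=
    inf_le_inf_right _ (lieKer_le_inducedKer K N X π)
  exact hle hx

lemma lieSchur_rel_le (K : Type) [Field K] {L : Type} [LieRing L] [LieAlgebra K L]
    (N : LieIdeal K L) (X : Type) (π : FreeLieAlgebra K X →ₗ⁅K⁆ L) :
    Submodule.comap
        ((π.ker ⊓ LieModule.lowerCentralSeries K (FreeLieAlgebra K X) (FreeLieAlgebra K X) 1 :
          LieIdeal K (FreeLieAlgebra K X)) : Submodule K (FreeLieAlgebra K X)).subtype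
        ((⁅π.ker, (⊤ : LieIdeal K (FreeLieAlgebra K X))⁆ :
          LieIdeal K (FreeLieAlgebra K X)) : Submodule K (FreeLieAlgebra K X)) ≤
      Submodule.comap (Submodule.inclusion (lieSchur_sub_le K N X π))
        (Submodule.comap
          (((lieInducedPresentation K N X π).ker ⊓
              LieModule.lowerCentralSeries K (FreeLieAlgebra K X) (FreeLieAlgebra K X) 1 :
            LieIdeal K (FreeLieAlgebra K X)) : Submodule K (FreeLieAlgebra K X)).subtype
          ((⁅(lieInducedPresentation K N X π).ker,
              (⊤ : LieIdeal K (FreeLieAlgebra K X))⁆ :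
            LieIdeal K (FreeLieAlgebra K X)) : Submodule K (FreeLieAlgebra K X))) := by
  intro x hx
  simp only [Submodule.mem_comap, Submodule.coe_subtype] at hx ⊢
  exact (LieSubmodule.toSubmodule_le_toSubmodule _ _).mpr
    (LieSubmodule.mono_lie (lieKer_le_inducedKer K N X π) le_rfl) hx

/-- The natural map `M(L) → M(L/N)` between Schur multipliers. -/
noncomputable def lieSchurNaturalMap (K : Type) [Field K] {L : Type} [LieRing L]
    [LieAlgebra K L] (N : LieIdeal K L) (X : Type) (π : FreeLieAlgebra K X →ₗ⁅K⁆ L) :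
    lieSchurMultiplier K X π →ₗ[K] lieSchurMultiplier K X (lieInducedPresentation K N X π) :=
  Submodule.mapQ _ _ (Submodule.inclusion (lieSchur_sub_le K N X π))
    (lieSchur_rel_le K N X π)
section Helpers

variable (K : Type) [Field K] {L : Type} [LieRing L] [LieAlgebra K L]
  (N : LieIdeal K L) (X : Type) (π : FreeLieAlgebra K X →ₗ⁅K⁆ L)

lemma sm_mem_indKer {a : FreeLieAlgebra K X} :
    a ∈ (lieInducedPresentation K N X π).ker ↔ π a ∈ N := by
  rw [LieHom.mem_ker]
  show (lieQuotientMkHom K N) (π a) = 0 ↔ _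
  exact Submodule.Quotient.mk_eq_zero _

lemma sm_QS_le (hN : N ≤ LieAlgebra.center K L) :
    (⁅(lieInducedPresentation K N X π).ker, (⊤ : LieIdeal K (FreeLieAlgebra K X))⁆ :
        LieIdeal K (FreeLieAlgebra K X)) ≤
      π.ker ⊓ LieModule.lowerCentralSeries K (FreeLieAlgebra K X) (FreeLieAlgebra K X) 1 := by
  rw [LieSubmodule.lie_le_iff]
  intro x hx m _
  rw [LieSubmodule.mem_inf]
  refine ⟨?_, ?_⟩
  · rw [LieHom.mem_ker, LieHom.map_lie]
    have hxN : π x ∈ N := (sm_mem_indKer K N X π).1 hx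
    have := hN hxN (π m)
    rw [← lie_skew, this, neg_zero]
  · rw [LieModule.lowerCentralSeries_succ]
    exact LieSubmodule.lie_mem_lie (LieSubmodule.mem_top _)
      (by rw [LieModule.lowerCentralSeries_zero]; exact LieSubmodule.mem_top _)

lemma sm_cond2_iff (hN : N ≤ LieAlgebra.center K L) :
    (∀ x ∈ N, (x : L) ∈ lieExteriorCenter K X π) ↔
      (⁅(lieInducedPresentation K N X π).ker, (⊤ : LieIdeal K (FreeLieAlgebra K X))⁆ :
          LieIdeal K (FreeLieAlgebra K X)) ≤
        ⁅π.ker, (⊤ : LieIdeal K (FreeLieAlgebra K X))⁆ := by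
  constructor
  · intro h
    rw [LieSubmodule.lie_le_iff]
    intro s hs b _
    exact h (π s) ((sm_mem_indKer K N X π).1 hs) s rfl b
  · intro h x hx a ha b
    have haS : a ∈ (lieInducedPresentation K N X π).ker :=
      (sm_mem_indKer K N X π).2 (ha ▸ hx)
    exact h (LieSubmodule.lie_mem_lie haS (LieSubmodule.mem_top _))

end Helpers
section Helpers2

variable (K : Type) [Field K] {L : Type} [LieRing L] [LieAlgebra K L]
  (N : LieIdeal K L) (X : Type) (π : FreeLieAlgebra K X →ₗ⁅K⁆ L)

lemma sm_natural_apply (x : ↥((π.ker ⊓ LieModule.lowerCentralSeries K (FreeLieAlgebra K X)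
      (FreeLieAlgebra K X) 1 : LieIdeal K (FreeLieAlgebra K X)) :
      Submodule K (FreeLieAlgebra K X))) :
    lieSchurNaturalMap K N X π (Submodule.Quotient.mk x) =
      Submodule.Quotient.mk (Submodule.inclusion (lieSchur_sub_le K N X π) x) := rfl

lemma sm_inj_iff (hN : N ≤ LieAlgebra.center K L) :
    Function.Injective (lieSchurNaturalMap K N X π) ↔
      (⁅(lieInducedPresentation K N X π).ker, (⊤ : LieIdeal K (FreeLieAlgebra K X))⁆ :
          LieIdeal K (FreeLieAlgebra K X)) ≤
        ⁅π.ker, (⊤ : LieIdeal K (FreeLieAlgebra K X))⁆ := by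
  constructor
  · intro hinj y hy
    have hyp : y ∈ π.ker ⊓ LieModule.lowerCentralSeries K (FreeLieAlgebra K X)
        (FreeLieAlgebra K X) 1 := sm_QS_le K N X π hN hy
    set x : ↥((π.ker ⊓ LieModule.lowerCentralSeries K (FreeLieAlgebra K X)
        (FreeLieAlgebra K X) 1 : LieIdeal K (FreeLieAlgebra K X)) :
        Submodule K (FreeLieAlgebra K X)) :=
      ⟨y, (LieSubmodule.mem_toSubmodule _).2 hyp⟩ with hxdef
    have h0 : lieSchurNaturalMap K N X π (Submodule.Quotient.mk x) = 0 := by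
      rw [sm_natural_apply]
      rw [Submodule.Quotient.mk_eq_zero]
      exact (LieSubmodule.mem_toSubmodule _).2 hy
    have h1 : (Submodule.Quotient.mk x : lieSchurMultiplier K X π) = 0 :=
      hinj (by rw [h0, map_zero])
    rw [Submodule.Quotient.mk_eq_zero] at h1
    exact (LieSubmodule.mem_toSubmodule _).1 h1
  · intro hle
    rw [← LinearMap.ker_eq_bot, LinearMap.ker_eq_bot']
    intro z hz
    obtain ⟨x, rfl⟩ := Submodule.Quotient.mk_surjective _ z
    rw [sm_natural_apply, Submodule.Quotient.mk_eq_zero] at hz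
    rw [Submodule.Quotient.mk_eq_zero]
    have : (x : FreeLieAlgebra K X) ∈ (⁅(lieInducedPresentation K N X π).ker,
        (⊤ : LieIdeal K (FreeLieAlgebra K X))⁆ : LieIdeal K (FreeLieAlgebra K X)) :=
      (LieSubmodule.mem_toSubmodule _).1 hz
    exact (LieSubmodule.mem_toSubmodule _).2 (hle this)

end Helpers2
section Helpers3

variable (K : Type) [Field K] {L : Type} [LieRing L] [LieAlgebra K L]
  (N : LieIdeal K L) (X : Type) (π : FreeLieAlgebra K X →ₗ⁅K⁆ L)

/-- The target `N ∩ L²` as a submodule of `L`. -/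
abbrev smNL2 : Submodule K L :=
  (N : Submodule K L) ⊓ ((LieModule.lowerCentralSeries K L L 1 : LieSubmodule K L L) : Submodule K L)

lemma sm_pi_mem_L2 {a : FreeLieAlgebra K X}
    (ha : a ∈ (LieModule.lowerCentralSeries K (FreeLieAlgebra K X) (FreeLieAlgebra K X) 1 :
      LieIdeal K (FreeLieAlgebra K X))) :
    π a ∈ (LieModule.lowerCentralSeries K L L 1 : LieSubmodule K L L) := by
  have h1 : π a ∈ LieIdeal.map π (LieModule.lowerCentralSeries K (FreeLieAlgebra K X)
      (FreeLieAlgebra K X) 1) := LieIdeal.mem_map ha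
  exact LieIdeal.map_lowerCentralSeries_le 1 h1

/-- The map `S ∩ F² → N ∩ L²` induced by `π`. -/
noncomputable def smPsi :
    ↥(((lieInducedPresentation K N X π).ker ⊓ LieModule.lowerCentralSeries K (FreeLieAlgebra K X)
        (FreeLieAlgebra K X) 1 : LieIdeal K (FreeLieAlgebra K X)) :
        Submodule K (FreeLieAlgebra K X)) →ₗ[K] ↥(smNL2 K N) :=
  LinearMap.codRestrict (smNL2 K N)
    ((π : FreeLieAlgebra K X →ₗ[K] L) ∘ₗ Submodule.subtype _)
    (by
      rintro ⟨a, ha⟩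
      have ha' : a ∈ (lieInducedPresentation K N X π).ker ⊓
          LieModule.lowerCentralSeries K (FreeLieAlgebra K X) (FreeLieAlgebra K X) 1 :=
        (LieSubmodule.mem_toSubmodule _).1 ha
      rw [LieSubmodule.mem_inf] at ha'
      exact ⟨(sm_mem_indKer K N X π).1 ha'.1,
        (LieSubmodule.mem_toSubmodule _).2 (sm_pi_mem_L2 K X π ha'.2)⟩)

lemma smPsi_apply (x) : ((smPsi K N X π x : L)) = π (x : FreeLieAlgebra K X) := rfl

/-- The surjection `M(L/N) → N ∩ L²`. -/
noncomputable def smPhi (hN : N ≤ LieAlgebra.center K L) :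
    lieSchurMultiplier K X (lieInducedPresentation K N X π) →ₗ[K] ↥(smNL2 K N) :=
  Submodule.liftQ _ (smPsi K N X π)
    (by
      intro x hx
      rw [Submodule.mem_comap] at hx
      rw [LinearMap.mem_ker]
      have h1 : (x : FreeLieAlgebra K X) ∈ (⁅(lieInducedPresentation K N X π).ker,
          (⊤ : LieIdeal K (FreeLieAlgebra K X))⁆ : LieIdeal K (FreeLieAlgebra K X)) :=
        (LieSubmodule.mem_toSubmodule _).1 hx
      have hR : (x : FreeLieAlgebra K X) ∈ π.ker :=
        (le_trans (sm_QS_le K N X π hN) inf_le_left) h1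
      rw [LieHom.mem_ker] at hR
      refine Subtype.ext ?_
      simp only [ZeroMemClass.coe_zero, smPsi_apply]
      exact hR)

lemma smPhi_apply (hN : N ≤ LieAlgebra.center K L) (x) :
    smPhi K N X π hN (Submodule.Quotient.mk x) = smPsi K N X π x := rfl

lemma smPhi_surjective (hN : N ≤ LieAlgebra.center K L) (hπ : Function.Surjective π) :
    Function.Surjective (smPhi K N X π hN) := by
  rintro ⟨y, hy⟩
  rw [Submodule.mem_inf] at hy
  have hyL2 : y ∈ LieIdeal.map π (LieModule.lowerCentralSeries K (FreeLieAlgebra K X)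
      (FreeLieAlgebra K X) 1) := by
    rw [LieIdeal.lowerCentralSeries_map_eq 1 hπ]
    exact (LieSubmodule.mem_toSubmodule _).1 hy.2
  rw [← LieSubmodule.mem_toSubmodule, LieIdeal.coe_map_of_surjective hπ] at hyL2
  obtain ⟨x, hx, hxy⟩ := hyL2
  have hxS : x ∈ (lieInducedPresentation K N X π).ker := by
    rw [sm_mem_indKer]
    show π x ∈ N
    rw [show π x = y from hxy]
    exact hy.1
  refine ⟨Submodule.Quotient.mk ⟨x, ?_⟩, ?_⟩
  · show x ∈ ((lieInducedPresentation K N X π).ker ⊓ LieModule.lowerCentralSeries K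
      (FreeLieAlgebra K X) (FreeLieAlgebra K X) 1 : LieIdeal K (FreeLieAlgebra K X))
    rw [LieSubmodule.mem_inf]
    exact ⟨hxS, hx⟩
  · rw [smPhi_apply]
    exact Subtype.ext hxy

lemma sm_ker_phi (hN : N ≤ LieAlgebra.center K L) :
    LinearMap.ker (smPhi K N X π hN) = LinearMap.range (lieSchurNaturalMap K N X π) := by
  ext z
  constructor
  · intro hz
    obtain ⟨x, rfl⟩ := Submodule.Quotient.mk_surjective _ z
    rw [LinearMap.mem_ker, smPhi_apply] at hz
    have hpix : π (x : FreeLieAlgebra K X) = 0 := by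
      exact Subtype.ext_iff.mp hz
    have hxp : (x : FreeLieAlgebra K X) ∈ ((π.ker ⊓ LieModule.lowerCentralSeries K
        (FreeLieAlgebra K X) (FreeLieAlgebra K X) 1 : LieIdeal K (FreeLieAlgebra K X)) :
        Submodule K (FreeLieAlgebra K X)) := by
      show (x : FreeLieAlgebra K X) ∈ (π.ker ⊓ LieModule.lowerCentralSeries K
        (FreeLieAlgebra K X) (FreeLieAlgebra K X) 1 : LieIdeal K (FreeLieAlgebra K X))
      have hx2 : (x : FreeLieAlgebra K X) ∈ ((lieInducedPresentation K N X π).ker ⊓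
          LieModule.lowerCentralSeries K (FreeLieAlgebra K X) (FreeLieAlgebra K X) 1 :
          LieIdeal K (FreeLieAlgebra K X)) := x.2
      rw [LieSubmodule.mem_inf] at hx2 ⊢
      exact ⟨LieHom.mem_ker.2 hpix, hx2.2⟩
    refine ⟨Submodule.Quotient.mk ⟨(x : FreeLieAlgebra K X), hxp⟩, ?_⟩
    rw [sm_natural_apply]
    exact congrArg Submodule.Quotient.mk (Subtype.ext rfl)
  · rintro ⟨w, rfl⟩
    obtain ⟨x, rfl⟩ := Submodule.Quotient.mk_surjective _ w
    rw [LinearMap.mem_ker, sm_natural_apply, smPhi_apply]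
    have hx2 : (x : FreeLieAlgebra K X) ∈ (π.ker ⊓
        LieModule.lowerCentralSeries K (FreeLieAlgebra K X) (FreeLieAlgebra K X) 1 :
        LieIdeal K (FreeLieAlgebra K X)) := x.2
    rw [LieSubmodule.mem_inf] at hx2
    have hxR := LieHom.mem_ker.1 hx2.1
    exact Subtype.ext hxR

end Helpers3
section Helpers4

variable (K : Type) [Field K] {L : Type} [LieRing L] [LieAlgebra K L]

lemma sm_findim [FiniteDimensional K L] (X : Type) (π : FreeLieAlgebra K X →ₗ⁅K⁆ L)
    (hπ : Function.Surjective π) : FiniteDimensional K (lieSchurMultiplier K X π) := by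
  classical
  set F := FreeLieAlgebra K X with hF
  set Qs : Submodule K F :=
    ((⁅π.ker, (⊤ : LieIdeal K F)⁆ : LieIdeal K F) : Submodule K F) with hQs
  let σ : L → F := fun y => (hπ y).choose
  have hσ : ∀ y, π (σ y) = y := fun y => (hπ y).choose_spec
  let b := Basis.ofVectorSpace K L
  let τ : L →ₗ[K] F := b.constr K (fun i => σ (b i))
  have hτb : ∀ i, τ (b i) = σ (b i) := fun i => b.constr_basis K _ i
  have hτ : ∀ y, π (τ y) = y := by
    have h : (π : F →ₗ[K] L) ∘ₗ τ = LinearMap.id := by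
      apply b.ext
      intro i
      simp only [LinearMap.coe_comp, Function.comp_apply, LinearMap.id_coe, id_eq, hτb]
      exact hσ (b i)
    intro y
    exact congrArg (fun f => f y) (congrArg DFunLike.coe h)
  have hτR : ∀ x : F, x - τ (π x) ∈ π.ker := by
    intro x
    rw [LieHom.mem_ker]
    have hsub : π (x - τ (π x)) = π x - π (τ (π x)) :=
      (π : F →ₗ[K] L).map_sub x (τ (π x))
    rw [hsub, hτ, sub_self]
  haveI : Finite (Basis.ofVectorSpaceIndex K L) :=
    (Basis.finite_ofVectorSpaceIndex_of_rank_lt_aleph0 (rank_lt_aleph0 K L)).to_subtype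
  let T : Set (F ⧸ Qs) := Set.range
    (fun ij : Basis.ofVectorSpaceIndex K L × Basis.ofVectorSpaceIndex K L =>
      Qs.mkQ ⁅σ (b ij.1), σ (b ij.2)⁆)
  have hTfin : T.Finite := Set.finite_range _
  let B : L →ₗ[K] L →ₗ[K] F ⧸ Qs := LinearMap.mk₂ K (fun u v => Qs.mkQ ⁅τ u, τ v⁆)
    (fun u u' v => by simp only [map_add, add_lie])
    (fun c u v => by simp only [map_smul, smul_lie])
    (fun u v v' => by simp only [map_add, lie_add])
    (fun c u v => by
      show Qs.mkQ ⁅τ u, τ (c • v)⁆ = c • Qs.mkQ ⁅τ u, τ v⁆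
      have h1 : ⁅τ u, τ (c • v)⁆ = c • ⁅τ u, τ v⁆ := by
        rw [map_smul]
        exact lie_smul c (τ u) (τ v)
      rw [h1, map_smul])
  have hB1 : ∀ (i : Basis.ofVectorSpaceIndex K L) (v : L),
      B (b i) v ∈ Submodule.span K T := by
    intro i v
    have hle : (⊤ : Submodule K L) ≤ Submodule.comap (B (b i)) (Submodule.span K T) := by
      rw [← b.span_eq, Submodule.span_le]
      rintro _ ⟨j, rfl⟩
      rw [SetLike.mem_coe, Submodule.mem_comap]
      apply Submodule.subset_span
      refine ⟨(i, j), ?_⟩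
      show Qs.mkQ ⁅σ (b i), σ (b j)⁆ = B (b i) (b j)
      simp only [B, LinearMap.mk₂_apply, hτb]
    have := hle (Submodule.mem_top : v ∈ ⊤)
    rwa [Submodule.mem_comap] at this
  have hBkey : ∀ u v : L, B u v ∈ Submodule.span K T := by
    intro u v
    have hle : (⊤ : Submodule K L) ≤ Submodule.comap (B.flip v) (Submodule.span K T) := by
      rw [← b.span_eq, Submodule.span_le]
      rintro _ ⟨i, rfl⟩
      rw [SetLike.mem_coe, Submodule.mem_comap, LinearMap.flip_apply]
      exact hB1 i v
    have := hle (Submodule.mem_top : u ∈ ⊤)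
    rwa [Submodule.mem_comap, LinearMap.flip_apply] at this
  have hbr : ∀ x y : F, Qs.mkQ ⁅x, y⁆ ∈ Submodule.span K T := by
    intro x y
    have hx := hτR x
    have hy := hτR y
    have e : ⁅x, y⁆ = ⁅x - τ (π x), y⁆ + (⁅τ (π x), y - τ (π y)⁆ + ⁅τ (π x), τ (π y)⁆) := by
      rw [sub_lie, lie_sub]
      abel
    have m1 : ⁅x - τ (π x), y⁆ ∈ (⁅π.ker, (⊤ : LieIdeal K F)⁆ : LieIdeal K F) :=
      LieSubmodule.lie_mem_lie hx (LieSubmodule.mem_top _)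
    have m2 : ⁅τ (π x), y - τ (π y)⁆ ∈ Qs := by
      have h2 : ⁅y - τ (π y), τ (π x)⁆ ∈ (⁅π.ker, (⊤ : LieIdeal K F)⁆ : LieIdeal K F) :=
        LieSubmodule.lie_mem_lie hy (LieSubmodule.mem_top _)
      have h3 : (⁅y - τ (π y), τ (π x)⁆ : F) ∈ Qs := h2
      have h4 := neg_mem h3
      rwa [lie_skew] at h4
    have z1 : Qs.mkQ ⁅x - τ (π x), y⁆ = 0 := by
      rw [Submodule.mkQ_apply, Submodule.Quotient.mk_eq_zero]
      exact m1
    have z2 : Qs.mkQ ⁅τ (π x), y - τ (π y)⁆ = 0 := by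
      rw [Submodule.mkQ_apply, Submodule.Quotient.mk_eq_zero]
      exact m2
    rw [e, map_add, map_add, z1, z2, zero_add, zero_add]
    exact hBkey (π x) (π y)
  haveI : FiniteDimensional K (Submodule.span K T) := FiniteDimensional.span_of_finite K hTfin
  have hF2span : ∀ w : F,
      w ∈ ((LieModule.lowerCentralSeries K F F 1 : LieIdeal K F) : Submodule K F) →
      Qs.mkQ w ∈ Submodule.span K T := by
    have heq : ((LieModule.lowerCentralSeries K F F 1 : LieIdeal K F) : Submodule K F) =
        Submodule.span K {m : F | ∃ x ∈ (⊤ : LieIdeal K F),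
          ∃ n ∈ (⊤ : LieIdeal K F), ⁅x, n⁆ = m} := by
      rw [LieModule.lowerCentralSeries_succ, LieModule.lowerCentralSeries_zero,
        LieIdeal.toLieSubalgebra_toSubmodule]
      rw [LieSubmodule.lieIdeal_oper_eq_linear_span']
    intro w hw
    rw [heq] at hw
    have himg : Qs.mkQ '' {m : F | ∃ x ∈ (⊤ : LieIdeal K F),
        ∃ n ∈ (⊤ : LieIdeal K F), ⁅x, n⁆ = m} ⊆ ↑(Submodule.span K T) := by
      rintro _ ⟨m, ⟨x, -, y, -, rfl⟩, rfl⟩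
      exact hbr x y
    have hmem : Qs.mkQ w ∈ Submodule.span K (Qs.mkQ '' {m : F | ∃ x ∈ (⊤ : LieIdeal K F),
        ∃ n ∈ (⊤ : LieIdeal K F), ⁅x, n⁆ = m}) := by
      rw [← Submodule.map_span]
      exact Submodule.mem_map_of_mem hw
    exact Submodule.span_le.2 himg hmem
  set p : Submodule K F :=
    ((π.ker ⊓ LieModule.lowerCentralSeries K F F 1 : LieIdeal K F) : Submodule K F) with hp
  let μ : p →ₗ[K] F ⧸ Qs := Qs.mkQ ∘ₗ p.subtype
  have hker : LinearMap.ker μ = Submodule.comap p.subtype Qs := by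
    ext z
    simp only [μ, LinearMap.mem_ker, LinearMap.coe_comp, Function.comp_apply,
      Submodule.coe_subtype, Submodule.mkQ_apply, Submodule.Quotient.mk_eq_zero,
      Submodule.mem_comap]
  have hrange : LinearMap.range μ ≤ Submodule.span K T := by
    rintro _ ⟨z, rfl⟩
    have hz2 : (z : F) ∈ (π.ker ⊓ LieModule.lowerCentralSeries K F F 1 : LieIdeal K F) := z.2
    rw [LieSubmodule.mem_inf] at hz2
    exact hF2span (z : F) hz2.2
  haveI : FiniteDimensional K (LinearMap.range μ) := Submodule.finiteDimensional_of_le hrange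
  have e : lieSchurMultiplier K X π ≃ₗ[K] LinearMap.range μ :=
    (Submodule.quotEquivOfEq _ _ hker.symm).trans μ.quotKerEquivRange
  exact LinearEquiv.finiteDimensional e.symm

end Helpers4

/-- for a central ideal `N` of a finite-dimensional Lie algebra `L`, the
following are equivalent: (i) `M(L) ≅ M(L/N)/(N ∩ L²)` (the quotient of `M(L/N)` by a
copy of `N ∩ L²`); (ii) `N ⊆ Z^∧(L)`; (iii) the natural map `M(L) → M(L/N)` is
injective. -/
theorem schur_multiplier_quotient_tfae (K L : Type) [Field K] [LieRing L]
    [LieAlgebra K L] [FiniteDimensional K L] (N : LieIdeal K L)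
    (hN : N ≤ LieAlgebra.center K L) :
    ∀ (X : Type) (π : FreeLieAlgebra K X →ₗ⁅K⁆ L), Function.Surjective π →
      (((∃ S : Submodule K (lieSchurMultiplier K X (lieInducedPresentation K N X π)),
          Nonempty (↥S ≃ₗ[K] ↥((N : Submodule K L) ⊓
            ((LieModule.lowerCentralSeries K L L 1 : LieSubmodule K L L) : Submodule K L))) ∧
          Nonempty (lieSchurMultiplier K X π ≃ₗ[K]
            (lieSchurMultiplier K X (lieInducedPresentation K N X π) ⧸ S))) ↔
        (∀ x ∈ N, (x : L) ∈ lieExteriorCenter K X π)) ∧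
      ((∀ x ∈ N, (x : L) ∈ lieExteriorCenter K X π) ↔
        Function.Injective (lieSchurNaturalMap K N X π))) := by
  intro X π hπ
  have hker_phi := sm_ker_phi K N X π hN
  have hphi_surj := smPhi_surjective K N X π hN hπ
  constructor
  · constructor
    · rintro ⟨S₀, ⟨e₁⟩, ⟨e₂⟩⟩
      rw [sm_cond2_iff K N X π hN, ← sm_inj_iff K N X π hN]
      haveI hM := sm_findim K X π hπ
      set lam := lieSchurNaturalMap K N X π with hlam
      have e3 : (lieSchurMultiplier K X (lieInducedPresentation K N X π) ⧸
          LinearMap.range lam) ≃ₗ[K] ↥(smNL2 K N) :=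
        (Submodule.quotEquivOfEq _ _ hker_phi.symm).trans
          ((smPhi K N X π hN).quotKerEquivOfSurjective hphi_surj)
      have e4 : (lieSchurMultiplier K X π ⧸ LinearMap.ker lam) ≃ₗ[K]
          ↥(LinearMap.range lam) := lam.quotKerEquivRange
      have h1 := rank_quotient_add_rank_of_divisionRing S₀
      have h2 := rank_quotient_add_rank_of_divisionRing (LinearMap.range lam)
      rw [e3.rank_eq] at h2
      rw [← e₂.rank_eq, e₁.rank_eq] at h1
      -- h1 : rank M(L) + rank NL2 = rank M(L/N) ; h2 : rank NL2 + rank range lam = rank M(L/N)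
      have hC : Module.rank K ↥(smNL2 K N) < Cardinal.aleph0 := rank_lt_aleph0 K _
      have hAr : Module.rank K (lieSchurMultiplier K X π) =
          Module.rank K ↥(LinearMap.range lam) := by
        refine Cardinal.eq_of_add_eq_add_right ?_ hC
        rw [h1, ← h2, add_comm]
      have hfr : Module.finrank K (lieSchurMultiplier K X π) =
          Module.finrank K ↥(LinearMap.range lam) := by
        unfold Module.finrank
        exact congrArg Cardinal.toNat hAr
      have h5 := Submodule.finrank_quotient_add_finrank (LinearMap.ker lam)
      have h6 : Module.finrank K (lieSchurMultiplier K X π ⧸ LinearMap.ker lam) =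
          Module.finrank K ↥(LinearMap.range lam) := e4.finrank_eq
      have h7 : Module.finrank K ↥(LinearMap.ker lam) = 0 := by omega
      have h8 : LinearMap.ker lam = ⊥ := Submodule.finrank_eq_zero.mp h7
      exact LinearMap.ker_eq_bot.mp h8
    · intro hcond
      have hle := (sm_cond2_iff K N X π hN).1 hcond
      have hinj : Function.Injective (lieSchurNaturalMap K N X π) :=
        (sm_inj_iff K N X π hN).2 hle
      obtain ⟨C, hC⟩ :=
        Submodule.exists_isCompl (LinearMap.range (lieSchurNaturalMap K N X π))
      refine ⟨C, ⟨?_⟩, ⟨?_⟩⟩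
      · exact ((Submodule.quotientEquivOfIsCompl _ C hC).symm.trans
          (Submodule.quotEquivOfEq _ _ hker_phi.symm)).trans
          ((smPhi K N X π hN).quotKerEquivOfSurjective hphi_surj)
      · exact (LinearEquiv.ofInjective _ hinj).trans
          (Submodule.quotientEquivOfIsCompl C
            (LinearMap.range (lieSchurNaturalMap K N X π)) hC.symm).symm
  · exact (sm_cond2_iff K N X π hN).trans (sm_inj_iff K N X π hN).symm
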